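/- Let H be a complex Hilbert space, let (e_n)_{n∈ℤ} be a Hilbert (orthonormal) basis of H indexed by the integers, let w : ℤ → ℂ be a bounded sequence of nonzero complex numbers, and let W be a bounded linear operator on H with W e_n = w_n · e_{n+1} for all n ∈ ℤ (a bilateral weighted shift). Then every λ ∈ ℂ with |λ| = 1 is an extended eigenvalue of W; that is, there exists a nonzero bounded linear operator X on H with W∘X = λ·(X∘W). -/

import Mathlib

open scoped InnerProductSpace ENNReal

section Aux

theorem diag_mem (u : ℤ → ℂ) (hu : ∀ n, ‖u n‖ = 1) (f : lp (fun _ : ℤ => ℂ) 2) :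
    Memℓp (fun n => u n * f n) 2 := by
  apply memℓp_gen
  have : (fun n : ℤ => ‖u n * f n‖ ^ (2 : ℝ≥0∞).toReal)
      = fun n : ℤ => ‖f n‖ ^ (2 : ℝ≥0∞).toReal := by
    funext n
    rw [norm_mul, hu n, one_mul]
  rw [this]
  exact ((lp.memℓp f).summable (by norm_num))

/-- Diagonal multiplication by a unimodular sequence on `ℓ²(ℤ, ℂ)`. -/
noncomputable def diagAux (u : ℤ → ℂ) (hu : ∀ n, ‖u n‖ = 1) :
    lp (fun _ : ℤ => ℂ) 2 →L[ℂ] lp (fun _ : ℤ => ℂ) 2 :=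
  LinearMap.mkContinuous
    { toFun := fun f => ⟨fun n => u n * f n, diag_mem u hu f⟩
      map_add' := by
        intro f g
        apply lp.ext
        funext n
        simp [mul_add]; rfl
      map_smul' := by
        intro c f
        apply lp.ext
        funext n
        simp; ring } 1 (by
    intro f
    rw [one_mul]
    have h2 : (0:ℝ) < (2 : ℝ≥0∞).toReal := by norm_num
    apply le_of_eq
    rw [lp.norm_eq_tsum_rpow h2, lp.norm_eq_tsum_rpow h2 f]
    congr 1
    apply tsum_congr
    intro n
    have : ‖u n * f n‖ = ‖f n‖ := by rw [norm_mul, hu n, one_mul]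
    simp only [LinearMap.coe_mk, AddHom.coe_mk]
    rw [show ‖(⟨fun n => u n * f n, diag_mem u hu f⟩ : lp (fun _ : ℤ => ℂ) 2) n‖
        = ‖u n * f n‖ from rfl, this])

theorem diagAux_apply (u : ℤ → ℂ) (hu : ∀ n, ‖u n‖ = 1) (f : lp (fun _ : ℤ => ℂ) 2) (n : ℤ) :
    (diagAux u hu f) n = u n * f n := rfl

end Aux

theorem stmt16 {H : Type*} [NormedAddCommGroup H] [InnerProductSpace ℂ H]
    [CompleteSpace H]
    (e : HilbertBasis ℤ ℂ H) (w : ℤ → ℂ) (hw : ∀ n, w n ≠ 0)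
    (hwbdd : ∃ M : ℝ, ∀ n, ‖w n‖ ≤ M)
    (W : H →L[ℂ] H) (hW : ∀ n : ℤ, W (e n) = w n • e (n + 1))
    (l : ℂ) (hl : ‖l‖ = 1) :
    ∃ X : H →L[ℂ] H, X ≠ 0 ∧ W.comp X = l • (X.comp W) := by
  classical
  have hl0 : l ≠ 0 := by
    intro h; rw [h] at hl; simp at hl
  set u : ℤ → ℂ := fun n => l ^ (-n) with hu_def
  have hu : ∀ n, ‖u n‖ = 1 := by
    intro n
    simp only [hu_def, norm_zpow, hl, one_zpow]
  set M : lp (fun _ : ℤ => ℂ) 2 →L[ℂ] lp (fun _ : ℤ => ℂ) 2 := diagAux u hu with hM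
  set X : H →L[ℂ] H :=
    (e.repr.symm.toLinearIsometry.toContinuousLinearMap).comp
      (M.comp e.repr.toLinearIsometry.toContinuousLinearMap) with hX
  have hXapply : ∀ x : H, X x = e.repr.symm (M (e.repr x)) := fun x => rfl
  have hMsingle : ∀ (n : ℤ) (c : ℂ), M (lp.single 2 n c) = lp.single 2 n (u n * c) := by
    intro n c
    apply lp.ext
    funext m
    rw [hM, diagAux_apply]
    by_cases h : m = n
    · subst h
      rw [lp.single_apply_self, lp.single_apply_self]
    · rw [lp.single_apply_ne _ _ _ h, lp.single_apply_ne _ _ _ h, mul_zero]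
  have hXe : ∀ n : ℤ, X (e n) = u n • e n := by
    intro n
    rw [hXapply, e.repr_self, hMsingle]
    have : lp.single (E := fun _ : ℤ => ℂ) 2 n (u n * 1)
        = u n • lp.single (E := fun _ : ℤ => ℂ) 2 n (1 : ℂ) := by
      have h := lp.single_smul (E := fun _ : ℤ => ℂ) 2 n (u n) (1 : ℂ)
      rw [smul_eq_mul] at h
      exact h
    rw [this, map_smul, e.repr_symm_single]
  refine ⟨X, ?_, ?_⟩
  · intro h
    have h0 : X (e 0) = 0 := by rw [h]; rfl
    rw [hXe 0] at h0
    have hu0 : u 0 = 1 := by simp [hu_def]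
    rw [hu0, one_smul] at h0
    have : ‖e 0‖ = 1 := e.orthonormal.1 0
    rw [h0, norm_zero] at this
    norm_num at this
  · have hdense : Dense ((Submodule.span ℂ (Set.range ⇑e)) : Set H) := by
      rw [Submodule.dense_iff_topologicalClosure_eq_top]
      exact e.dense_span
    apply ContinuousLinearMap.ext_on hdense
    rintro x ⟨n, rfl⟩
    simp only [ContinuousLinearMap.comp_apply, ContinuousLinearMap.smul_apply]
    rw [hXe n, hW n, map_smul, hW n, map_smul, hXe (n + 1)]
    simp only [smul_smul]
    congr 1
    have huc : u n = l * u (n + 1) := by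
      simp only [hu_def]
      rw [neg_add, zpow_add₀ hl0, zpow_neg l 1, zpow_one]
      rw [mul_comm, mul_assoc, inv_mul_cancel₀ hl0, mul_one]
    rw [huc]; ring
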